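/- arXiv:2401.08512 — 3 statements merged into one kernel-verified Lean document; each statement's English description precedes it below -/
import Mathlib

section
/- Let f : ℝ³ → ℝ be twice continuously differentiable, let q, β ∈ ℝ, and let X : ℝ → ℝ³ be twice differentiable with ∇f(X(t)) ≠ 0 for all t, satisfying the magnetic geodesic equation X''(t) = −(Hess f_{X(t)}(X'(t), X'(t)) / ‖∇f(X(t))‖²) • ∇f(X(t)) + q • (X'(t) × (β • n̂(X(t)))) for all t ∈ ℝ. If f(X(0)) = 0 and ⟨∇f(X(0)), X'(0)⟩ = 0, then for all t ∈ ℝ one has f(X(t)) = 0 and ⟨∇f(X(t)), X'(t)⟩ = 0; that is, solutions of the magnetic geodesic equation starting on the surface S = {f = 0} with tangential initial velocity remain on S with tangential velocity. -/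
/-- Cross product on `ℝ³` (as `EuclideanSpace ℝ (Fin 3)`). -/
noncomputable def cross3 (a b : EuclideanSpace ℝ (Fin 3)) : EuclideanSpace ℝ (Fin 3) :=
  WithLp.toLp 2 (crossProduct a b)

/-- The Hessian of `f` at `x` as a bilinear form: `⟪D(∇f)(x)[u], v⟫`. -/
noncomputable def hessian (f : EuclideanSpace ℝ (Fin 3) → ℝ)
    (x u v : EuclideanSpace ℝ (Fin 3)) : ℝ :=
  inner ℝ (fderiv ℝ (gradient f) x u) v

/-- The unit normal field `n̂(x) = ∇f(x)/‖∇f(x)‖` of level surfaces of `f`. -/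
noncomputable def nhat (f : EuclideanSpace ℝ (Fin 3) → ℝ)
    (x : EuclideanSpace ℝ (Fin 3)) : EuclideanSpace ℝ (Fin 3) :=
  ‖gradient f x‖⁻¹ • gradient f x

lemma inner_cross_self (v w : EuclideanSpace ℝ (Fin 3)) :
    (inner ℝ w (cross3 v w) : ℝ) = 0 := by
  have := dot_cross_self v w
  simp only [dotProduct, Fin.sum_univ_three] at this
  simp only [cross3, PiLp.inner_apply, RCLike.inner_apply, conj_trivial, Fin.sum_univ_three]
  convert this using 2 <;> ring

/-- Solutions of the magnetic geodesic equation starting on the surface `{f = 0}` with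
tangential initial velocity remain on the surface with tangential velocity. -/
theorem magnetic_geodesic_stays_on_surface
    (f : EuclideanSpace ℝ (Fin 3) → ℝ) (hf : ContDiff ℝ 2 f) (q β : ℝ)
    (X X' X'' : ℝ → EuclideanSpace ℝ (Fin 3))
    (hX : ∀ t, HasDerivAt X (X' t) t)
    (hX' : ∀ t, HasDerivAt X' (X'' t) t)
    (hgrad : ∀ t, gradient f (X t) ≠ 0)
    (heqn : ∀ t, X'' t
      = -(hessian f (X t) (X' t) (X' t) / ‖gradient f (X t)‖ ^ 2) • gradient f (X t)
        + q • cross3 (X' t) (β • nhat f (X t)))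
    (h0 : f (X 0) = 0)
    (h0' : (inner ℝ (gradient f (X 0)) (X' 0) : ℝ) = 0) :
    ∀ t, f (X t) = 0 ∧ (inner ℝ (gradient f (X t)) (X' t) : ℝ) = 0 := by
  have hfd : Differentiable ℝ f := hf.differentiable (by norm_num)
  have hgd : Differentiable ℝ (gradient f) := by
    have h1 : ContDiff ℝ 1 (fderiv ℝ f) := hf.fderiv_right (by norm_num)
    have : Differentiable ℝ (fderiv ℝ f) := h1.differentiable (by norm_num)
    exact fun x => ((InnerProductSpace.toDual ℝ
      (EuclideanSpace ℝ (Fin 3))).symm.differentiable.differentiableAt).comp x (this x)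
  -- the function h t = ⟪∇f(X t), X' t⟫ has derivative 0
  set h : ℝ → ℝ := fun t => (inner ℝ (gradient f (X t)) (X' t) : ℝ) with hh
  have hGderiv : ∀ t, HasDerivAt (fun t => gradient f (X t))
      (fderiv ℝ (gradient f) (X t) (X' t)) t := fun t =>
    ((hgd (X t)).hasFDerivAt).comp_hasDerivAt t (hX t)
  have hhderiv : ∀ t, HasDerivAt h 0 t := by
    intro t
    have H := (HasDerivAt.inner ℝ (hGderiv t) (hX' t))
    have hcross : (inner ℝ (gradient f (X t))
        (q • cross3 (X' t) (β • nhat f (X t))) : ℝ) = 0 := by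
      rw [real_inner_smul_right]
      have : cross3 (X' t) (β • nhat f (X t))
          = (β * ‖gradient f (X t)‖⁻¹) • cross3 (X' t) (gradient f (X t)) := by
        simp only [cross3, nhat, smul_smul]
        rw [WithLp.ofLp_smul, map_smul, WithLp.toLp_smul]
      rw [this, real_inner_smul_right, inner_cross_self]
      ring
    have hval : (inner ℝ (gradient f (X t)) (X'' t) : ℝ)
        + (inner ℝ (fderiv ℝ (gradient f) (X t) (X' t)) (X' t) : ℝ) = 0 := by
      rw [heqn t, inner_add_right, hcross, real_inner_smul_right,
        real_inner_self_eq_norm_sq]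
      have hne : ‖gradient f (X t)‖ ^ 2 ≠ 0 :=
        pow_ne_zero _ (norm_ne_zero_iff.mpr (hgrad t))
      unfold hessian
      field_simp
      rw [mul_div_assoc, div_self (norm_ne_zero_iff.mpr (hgrad t))]; ring
    rw [hval] at H
    exact H
  have hconst : ∀ t, h t = 0 := by
    intro t
    have := is_const_of_deriv_eq_zero (f := h)
      (fun s => (hhderiv s).differentiableAt)
      (fun s => (hhderiv s).deriv) t 0
    rw [this, hh]; exact h0'
  intro t
  have hfXderiv : ∀ s, HasDerivAt (fun s => f (X s)) 0 s := by
    intro s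
    have := ((hfd (X s)).hasGradientAt.hasFDerivAt).comp_hasDerivAt s (hX s)
    simp only [InnerProductSpace.toDual_apply_apply] at this
    have h0s := hconst s
    rw [hh] at h0s
    simp [h0s] at this; exact this
  have : f (X t) = f (X 0) :=
    is_const_of_deriv_eq_zero (fun s => (hfXderiv s).differentiableAt)
      (fun s => (hfXderiv s).deriv) t 0
  exact ⟨this.trans h0, hconst t⟩
end

section
/- Let f : ℝ³ → ℝ be twice continuously differentiable, let q, β ∈ ℝ, and let X : ℝ → ℝ³ be twice differentiable with ∇f(X(t)) ≠ 0 for all t, satisfying the magnetic geodesic equation X''(t) = −(Hess f_{X(t)}(X'(t), X'(t)) / ‖∇f(X(t))‖²) • ∇f(X(t)) + q • (X'(t) × (β • n̂(X(t)))) for all t ∈ ℝ. If ⟨∇f(X(0)), X'(0)⟩ = 0, then ‖X'(t)‖ = ‖X'(0)‖ for all t ∈ ℝ; that is, magnetic geodesics travel at constant speed. -/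
open scoped RealInnerProductSpace

lemma inner_eq_dot (a b : EuclideanSpace ℝ (Fin 3)) :
    ⟪a, b⟫ = dotProduct (a : Fin 3 → ℝ) (b : Fin 3 → ℝ) := by
  simp [PiLp.inner_apply, dotProduct, RCLike.inner_apply, mul_comm]

lemma inner_cross_left (a b : EuclideanSpace ℝ (Fin 3)) : ⟪cross3 a b, a⟫ = 0 := by
  rw [real_inner_comm, inner_eq_dot]
  exact dot_self_cross a b

lemma inner_cross_right (a b : EuclideanSpace ℝ (Fin 3)) : ⟪cross3 a b, b⟫ = 0 := by
  rw [real_inner_comm, inner_eq_dot]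
  exact dot_cross_self a b

lemma grad_diff {f : EuclideanSpace ℝ (Fin 3) → ℝ} (hf : ContDiff ℝ 2 f) :
    Differentiable ℝ (gradient f) := by
  have h1 : ContDiff ℝ 1 (fderiv ℝ f) := hf.fderiv_right (by norm_num)
  have : gradient f = fun x =>
      (InnerProductSpace.toDual ℝ (EuclideanSpace ℝ (Fin 3))).symm (fderiv ℝ f x) := rfl
  rw [this]
  exact fun x => ((InnerProductSpace.toDual ℝ
    (EuclideanSpace ℝ (Fin 3))).symm.differentiable.differentiableAt).comp x
    (h1.differentiable one_ne_zero x)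

/-- Magnetic geodesics travel at constant speed. -/
theorem magnetic_geodesic_constant_speed
    (f : EuclideanSpace ℝ (Fin 3) → ℝ) (hf : ContDiff ℝ 2 f) (q β : ℝ)
    (X X' X'' : ℝ → EuclideanSpace ℝ (Fin 3))
    (hX : ∀ t, HasDerivAt X (X' t) t)
    (hX' : ∀ t, HasDerivAt X' (X'' t) t)
    (hgrad : ∀ t, gradient f (X t) ≠ 0)
    (heqn : ∀ t, X'' t
      = -(hessian f (X t) (X' t) (X' t) / ‖gradient f (X t)‖ ^ 2) • gradient f (X t)
        + q • cross3 (X' t) (β • nhat f (X t)))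
    (h0' : (inner ℝ (gradient f (X 0)) (X' 0) : ℝ) = 0) :
    ∀ t, ‖X' t‖ = ‖X' 0‖ := by
  set g : ℝ → EuclideanSpace ℝ (Fin 3) := fun t => gradient f (X t) with hgdef
  have hgd : ∀ t, HasDerivAt g (fderiv ℝ (gradient f) (X t) (X' t)) t := fun t =>
    ((grad_diff hf (X t)).hasFDerivAt).comp_hasDerivAt t (hX t)
  -- the cross term is orthogonal to g
  have hcrossg : ∀ t, ⟪g t, q • cross3 (X' t) (β • nhat f (X t))⟫ = 0 := by
    intro t
    have : cross3 (X' t) (β • nhat f (X t)) = (β * ‖g t‖⁻¹) • cross3 (X' t) (g t) := by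
      show WithLp.toLp 2 (crossProduct _ _) = _
      rw [nhat, smul_smul]
      simp [cross3, map_smul, g]
    rw [this, real_inner_smul_right, real_inner_smul_right, real_inner_comm,
      inner_cross_right, mul_zero, mul_zero]
  set φ : ℝ → ℝ := fun t => ⟪g t, X' t⟫ with hφdef
  have hφd : ∀ t, HasDerivAt φ 0 t := by
    intro t
    have h := (hgd t).inner ℝ (hX' t)
    have hH : ⟪fderiv ℝ (gradient f) (X t) (X' t), X' t⟫
        = hessian f (X t) (X' t) (X' t) := rfl
    have hgn : ‖g t‖ ≠ 0 := norm_ne_zero_iff.2 (hgrad t)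
    have hinner : ⟪g t, X'' t⟫ = -hessian f (X t) (X' t) (X' t) := by
      rw [heqn t, inner_add_right, hcrossg t, add_zero, real_inner_smul_right,
        real_inner_self_eq_norm_sq]
      simp only [g] at hgn ⊢
      field_simp
    rw [show (0:ℝ) = ⟪g t, X'' t⟫ + ⟪fderiv ℝ (gradient f) (X t) (X' t), X' t⟫ by
      rw [hH, hinner]; ring]
    exact h
  have hφ0 : ∀ t, φ t = 0 := by
    intro t
    have := is_const_of_deriv_eq_zero (fun s => (hφd s).differentiableAt)
      (fun s => (hφd s).deriv) t 0
    rw [this]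
    exact h0'
  -- speed squared is constant
  set ψ : ℝ → ℝ := fun t => ⟪X' t, X' t⟫ with hψdef
  have hψd : ∀ t, HasDerivAt ψ 0 t := by
    intro t
    have h := (hX' t).inner ℝ (hX' t)
    have hX''X' : ⟪X'' t, X' t⟫ = 0 := by
      rw [heqn t, inner_add_left, real_inner_smul_left, real_inner_smul_left,
        inner_cross_left]
      have : ⟪g t, X' t⟫ = 0 := hφ0 t
      rw [this]
      ring
    have h2 : ⟪X' t, X'' t⟫ = 0 := by rw [real_inner_comm]; exact hX''X'
    rw [show (0:ℝ) = ⟪X' t, X'' t⟫ + ⟪X'' t, X' t⟫ by rw [h2, hX''X']; ring]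
    exact h
  intro t
  have hψ := is_const_of_deriv_eq_zero (fun s => (hψd s).differentiableAt)
    (fun s => (hψd s).deriv) t 0
  have h1 : ‖X' t‖ ^ 2 = ‖X' 0‖ ^ 2 := by
    rw [← real_inner_self_eq_norm_sq, ← real_inner_self_eq_norm_sq]
    exact hψ
  nlinarith [norm_nonneg (X' t), norm_nonneg (X' 0)]
end

section
/- Let f : ℝ³ → ℝ be twice continuously differentiable, let x ∈ ℝ³ satisfy f(x) = 0 and ∇f(x) ≠ 0, and let v ∈ ℝ³ be a unit vector orthogonal to n̂(x). Then, writing w := v × n̂(x), the following identity holds: v × (Dn̂(x)[w]) = −(Hess f_x(w, w) / ‖∇f(x)‖) • n̂(x). -/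
open Topology

lemma cross3_triple (a b c : EuclideanSpace ℝ (Fin 3)) :
    cross3 a (cross3 b c) = (inner ℝ a c : ℝ) • b - (inner ℝ a b : ℝ) • c := by
  ext i
  fin_cases i <;>
    simp [cross3, cross_apply, PiLp.inner_apply, RCLike.inner_apply, Fin.sum_univ_three] <;>
    ring

lemma cross3_cyclic (a b c : EuclideanSpace ℝ (Fin 3)) :
    (inner ℝ a (cross3 b c) : ℝ) = inner ℝ c (cross3 a b) := by
  simp [cross3, cross_apply, PiLp.inner_apply, RCLike.inner_apply, Fin.sum_univ_three]
  ring

lemma cross3_anticomm' (a b : EuclideanSpace ℝ (Fin 3)) : cross3 a b = -cross3 b a := by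
  ext i
  fin_cases i <;>
    simp [cross3, cross_apply, PiLp.inner_apply, RCLike.inner_apply] <;> ring

lemma cross3_zero_right (a : EuclideanSpace ℝ (Fin 3)) : cross3 a 0 = 0 := by
  ext i
  fin_cases i <;> simp [cross3, cross_apply]

lemma cross3_smul_right (c : ℝ) (a b : EuclideanSpace ℝ (Fin 3)) :
    cross3 a (c • b) = c • cross3 a b := by
  ext i
  fin_cases i <;> simp [cross3, cross_apply, mul_comm, mul_left_comm]

lemma inner_cross3_self_right (a b : EuclideanSpace ℝ (Fin 3)) :
    (inner ℝ a (cross3 b a) : ℝ) = 0 := by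
  simp [cross3, cross_apply, PiLp.inner_apply, RCLike.inner_apply, Fin.sum_univ_three]
  ring

lemma gradient_contDiffOne {f : EuclideanSpace ℝ (Fin 3) → ℝ} (hf : ContDiff ℝ 2 f) :
    ContDiff ℝ 1 (gradient f) := by
  have h1 : ContDiff ℝ 1 (fderiv ℝ f) := hf.fderiv_right (by norm_num)
  have h2 : gradient f = fun y =>
      (InnerProductSpace.toDual ℝ (EuclideanSpace ℝ (Fin 3))).symm (fderiv ℝ f y) := rfl
  rw [h2]
  exact (InnerProductSpace.toDual ℝ (EuclideanSpace ℝ (Fin 3))).symm.contDiff.comp h1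

/-- For a unit tangent vector `v` at a point `x` on the surface `{f = 0}`, setting
`w := v × n̂(x)` one has `v × (Dn̂(x)[w]) = −(Hess f_x(w, w)/‖∇f(x)‖) • n̂(x)`. -/
theorem second_fund_form_identity
    (f : EuclideanSpace ℝ (Fin 3) → ℝ) (hf : ContDiff ℝ 2 f)
    (x : EuclideanSpace ℝ (Fin 3)) (hx0 : f x = 0) (hx : gradient f x ≠ 0)
    (v : EuclideanSpace ℝ (Fin 3)) (hv : ‖v‖ = 1)
    (hvt : (inner ℝ v (nhat f x) : ℝ) = 0) :
    cross3 v (fderiv ℝ (nhat f) x (cross3 v (nhat f x)))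
      = -(hessian f x (cross3 v (nhat f x)) (cross3 v (nhat f x)) / ‖gradient f x‖)
          • nhat f x := by
  set g : EuclideanSpace ℝ (Fin 3) → EuclideanSpace ℝ (Fin 3) := gradient f with hgdef
  have hgdiff : Differentiable ℝ g := (gradient_contDiffOne hf).differentiable one_ne_zero
  have hgx : DifferentiableAt ℝ g x := hgdiff x
  set r : ℝ := ‖g x‖ with hrdef
  have hr : r ≠ 0 := norm_ne_zero_iff.mpr hx
  set n : EuclideanSpace ℝ (Fin 3) := nhat f x with hndef
  have hn : n = r⁻¹ • g x := rfl
  set w : EuclideanSpace ℝ (Fin 3) := cross3 v n with hwdef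
  have hc : DifferentiableAt ℝ (fun y => ‖g y‖⁻¹) x :=
    ((hgx.norm ℝ) hx).inv hr
  have hnhat : nhat f = fun y => ‖g y‖⁻¹ • g y := rfl
  have hdn : DifferentiableAt ℝ (nhat f) x := by
    rw [hnhat]; exact hc.smul hgx
  set D : EuclideanSpace ℝ (Fin 3) →L[ℝ] EuclideanSpace ℝ (Fin 3) := fderiv ℝ (nhat f) x with hDdef
  set H : EuclideanSpace ℝ (Fin 3) →L[ℝ] EuclideanSpace ℝ (Fin 3) := fderiv ℝ g x with hHdef
  have hDform : D = ‖g x‖⁻¹ • H + (fderiv ℝ (fun y => ‖g y‖⁻¹) x).smulRight (g x) := by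
    rw [hDdef, hnhat, fderiv_fun_smul hc hgx]
  have hDw : D w = r⁻¹ • H w + (fderiv ℝ (fun y => ‖g y‖⁻¹) x w) • g x := by
    rw [hDform]; simp [hrdef]
  -- ⟪g x, w⟫ = 0
  have hgw : (inner ℝ (g x) w : ℝ) = 0 := by
    have h1 : w = cross3 v (r⁻¹ • g x) := by rw [hwdef, hn]
    rw [h1, cross3_smul_right, real_inner_smul_right, inner_cross3_self_right, mul_zero]
  have hnn : (inner ℝ n n : ℝ) = 1 := by
    rw [hn, real_inner_smul_left, real_inner_smul_right, real_inner_self_eq_norm_mul_norm]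
    field_simp
    rfl
  have hnw : (inner ℝ n w : ℝ) = 0 := by
    rw [hn, real_inner_smul_left, hgw, mul_zero]
  -- ⟪n, D w⟫ = 0, since n̂ has constant norm one near x
  have hnDw : (inner ℝ n (D w) : ℝ) = 0 := by
    have hev : (fun y => (inner ℝ (nhat f y) (nhat f y) : ℝ)) =ᶠ[𝓝 x] fun _ => (1:ℝ) := by
      have hne : ∀ᶠ y in 𝓝 x, g y ≠ 0 := hgx.continuousAt.eventually_ne hx
      filter_upwards [hne] with y hy
      have hny : ‖g y‖ ≠ 0 := norm_ne_zero_iff.mpr hy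
      show (inner ℝ (‖g y‖⁻¹ • g y) (‖g y‖⁻¹ • g y) : ℝ) = 1
      rw [real_inner_smul_left, real_inner_smul_right, real_inner_self_eq_norm_mul_norm]
      field_simp
    have h1 : HasFDerivAt (fun y => (inner ℝ (nhat f y) (nhat f y) : ℝ))
        ((fderivInnerCLM ℝ (n, n)).comp (D.prod D)) x :=
      hdn.hasFDerivAt.inner ℝ hdn.hasFDerivAt
    have h2 : HasFDerivAt (fun y => (inner ℝ (nhat f y) (nhat f y) : ℝ))
        (0 : EuclideanSpace ℝ (Fin 3) →L[ℝ] ℝ) x :=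
      (hasFDerivAt_const (1:ℝ) x).congr_of_eventuallyEq hev
    have h3 := h1.unique h2
    have h4 := congrFun (congrArg DFunLike.coe h3) w
    simp only [ContinuousLinearMap.comp_apply, ContinuousLinearMap.prod_apply,
      fderivInnerCLM_apply, ContinuousLinearMap.zero_apply] at h4
    have h5 : (inner ℝ n (D w) : ℝ) + inner ℝ (D w) n = 0 := h4
    rw [real_inner_comm (D w) n] at h5
    linarith
  -- ⟪D w, w⟫ = r⁻¹ * ⟪H w, w⟫
  have hDww : (inner ℝ (D w) w : ℝ) = r⁻¹ * inner ℝ (H w) w := by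
    rw [hDw, inner_add_left, real_inner_smul_left, real_inner_smul_left, hgw]
    ring
  -- final assembly
  set z : EuclideanSpace ℝ (Fin 3) := cross3 v (D w) with hzdef
  have hnv : (inner ℝ n v : ℝ) = 0 := by rw [real_inner_comm]; exact hvt
  have hz1 : cross3 n z = 0 := by
    rw [hzdef, cross3_triple, hnDw, hnv]
    simp
  have hz2 : z = (inner ℝ n z : ℝ) • n := by
    have := cross3_triple n n z
    rw [hz1, cross3_zero_right, hnn, one_smul] at this
    exact (sub_eq_zero.mp this.symm).symm
  have hz3 : (inner ℝ n z : ℝ) = -(r⁻¹ * inner ℝ (H w) w) := by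
    rw [hzdef, cross3_cyclic n v (D w)]
    rw [cross3_anticomm' n v, ← hwdef]
    rw [inner_neg_right, hDww]
  have hhess : hessian f x w w = inner ℝ (H w) w := rfl
  rw [hz2, hz3, hhess]
  congr 1
  field_simp
end
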